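/- The fundamental category functor τ₁ (left adjoint to the nerve) takes inner anodyne maps of simplicial sets to isomorphisms of categories. -/

import Mathlib

open CategoryTheory Limits Simplicial

/-- A map of simplicial sets is an inner fibration if it has the right lifting property
with respect to all inner horn inclusions. -/
def InnerFibration {X Y : SSet} (p : X ⟶ Y) : Prop :=
  ∀ (n : ℕ) (i : Fin (n + 3)), 0 < i.val → i.val < n + 2 →
    HasLiftingProperty (SSet.horn (n + 2) i).ι p

/-- A map of simplicial sets is inner anodyne if it has the left lifting property with
respect to all inner fibrations. -/
def InnerAnodyne {A B : SSet} (j : A ⟶ B) : Prop :=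
  ∀ ⦃X Y : SSet⦄ (p : X ⟶ Y), InnerFibration p → HasLiftingProperty j p

section aux
open SSet

lemma aux_spine_naturality {X Y : SSet.{0}} (σ : X ⟶ Y) (n : ℕ) (Δ : X _⦋n⦌) :
    Y.spine n (σ.app _ Δ) = SSet.Path.map (X.spine n Δ) σ := by
  ext i
  · dsimp [spine, SSet.Path.map]
    exact (NatTrans.naturality_apply σ _ Δ).symm
  · dsimp [spine, SSet.Path.map]
    exact (NatTrans.naturality_apply σ _ Δ).symm

lemma aux_spine_yonedaEquiv {X : SSet.{0}} (n : ℕ) (u : Δ[n] ⟶ X) :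
    X.spine n (SSet.yonedaEquiv u) =
      SSet.Path.map (stdSimplex.spineId n) u := by
  have h : SSet.yonedaEquiv u = u.app _ (stdSimplex.objEquiv.symm (𝟙 _)) := rfl
  rw [h, stdSimplex.spineId, aux_spine_naturality]

/-- Inner horn fillers in a strict Segal simplicial set are unique. -/
lemma aux_unique_filler {X : SSet.{0}} [SSet.IsStrictSegal X] {n : ℕ} {i : Fin (n + 3)}
    (h₀ : 0 < i) (hₙ : i < Fin.last (n+2)) (u v : Δ[n+2] ⟶ X)
    (h : (horn (n+2) i).ι ≫ u = (horn (n+2) i).ι ≫ v) : u = v := by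
  apply (SSet.yonedaEquiv (X := X) (n := ⦋n+2⦌)).injective
  apply (SSet.StrictSegal.ofIsStrictSegal X).spineInjective
  dsimp [SSet.StrictSegal.spineEquiv]
  rw [aux_spine_yonedaEquiv, aux_spine_yonedaEquiv,
    ← horn.spineId_map_hornInclusion i h₀ hₙ]
  show SSet.Path.map _ ((horn _ i).ι ≫ u) = SSet.Path.map _ ((horn _ i).ι ≫ v)
  rw [h]

/-- The map to the terminal object from a quasicategory is an inner fibration. -/
lemma aux_innerFibration_toTerminal (S : SSet.{0}) [SSet.Quasicategory S] :
    _root_.InnerFibration (terminal.from S) := by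
  intro n i h0 hn
  constructor
  intro g b sq
  obtain ⟨l, hl⟩ := SSet.Quasicategory.hornFilling' g
    (by rw [Fin.lt_def, Fin.val_zero]; exact h0) (by rw [Fin.lt_def, Fin.val_last]; exact hn)
  exact ⟨⟨⟨l, hl.symm, terminal.hom_ext _ _⟩⟩⟩

/-- The diagonal of a strict Segal simplicial set is an inner fibration. -/
lemma aux_innerFibration_diag (S : SSet.{0}) [SSet.IsStrictSegal S] :
    _root_.InnerFibration (prod.lift (𝟙 S) (𝟙 S)) := by
  intro n i h0 hn
  constructor
  intro g b sq
  have h0' : 0 < i := by rw [Fin.lt_def, Fin.val_zero]; exact h0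
  have hn' : i < Fin.last (n+2) := by rw [Fin.lt_def, Fin.val_last]; exact hn
  have hfst : (horn (n+2) i).ι ≫ (b ≫ prod.fst) = g := by
    rw [← Category.assoc, ← sq.w]
    simp [prod.lift_fst]
  have hsnd : (horn (n+2) i).ι ≫ (b ≫ prod.snd) = g := by
    rw [← Category.assoc, ← sq.w]
    simp [prod.lift_snd]
  have heq : b ≫ prod.fst = b ≫ prod.snd :=
    aux_unique_filler h0' hn' _ _ (hfst.trans hsnd.symm)
  refine ⟨⟨⟨b ≫ prod.fst, hfst, ?_⟩⟩⟩
  apply Limits.prod.hom_ext <;> simp [heq, prod.lift_fst, prod.lift_snd]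

end aux

/-- The fundamental category functor `τ₁` (any left adjoint to the nerve) takes inner
anodyne maps of simplicial sets to isomorphisms of categories. -/
theorem fundamental_category_functor_inner_anodyne_iso
    (τ : SSet.{0} ⥤ Cat.{0, 0}) (adj : τ ⊣ nerveFunctor)
    {X Y : SSet} (f : X ⟶ Y) (hf : InnerAnodyne f) :
    IsIso (τ.map f) := by
  have surj : ∀ (C : Cat.{0,0}) (u : τ.obj X ⟶ C), ∃ w : τ.obj Y ⟶ C, τ.map f ≫ w = u := by
    intro C u
    have : SSet.Quasicategory (nerveFunctor.obj C) :=
      (inferInstance : SSet.Quasicategory (nerve C))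
    have hlp := hf (terminal.from (nerveFunctor.obj C)) (aux_innerFibration_toTerminal _)
    have sq : CommSq (adj.homEquiv X C u) f (terminal.from (nerveFunctor.obj C))
        (terminal.from Y) := ⟨terminal.hom_ext _ _⟩
    obtain ⟨⟨⟨l, hl, -⟩⟩⟩ := hlp.sq_hasLift sq
    refine ⟨(adj.homEquiv Y C).symm l, (adj.homEquiv X C).injective ?_⟩
    rw [Adjunction.homEquiv_naturality_left, Equiv.apply_symm_apply, hl]
  have inj : ∀ (C : Cat.{0,0}) (u v : τ.obj Y ⟶ C),
      τ.map f ≫ u = τ.map f ≫ v → u = v := by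
    intro C u v huv
    have : SSet.IsStrictSegal (nerveFunctor.obj C) :=
      (inferInstance : SSet.IsStrictSegal (nerve C))
    set g := adj.homEquiv Y C u with hg
    set h := adj.homEquiv Y C v with hh
    have hfg : f ≫ g = f ≫ h := by
      rw [hg, hh, ← Adjunction.homEquiv_naturality_left,
        ← Adjunction.homEquiv_naturality_left, huv]
    have hlp := hf (prod.lift (𝟙 (nerveFunctor.obj C)) (𝟙 (nerveFunctor.obj C)))
      (aux_innerFibration_diag _)
    have sq : CommSq (f ≫ g) f (prod.lift (𝟙 _) (𝟙 _)) (prod.lift g h) := by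
      constructor
      apply Limits.prod.hom_ext <;> simp [hfg]
    obtain ⟨⟨⟨l, hl, hl'⟩⟩⟩ := hlp.sq_hasLift sq
    have e1 : l = g := by
      have := congrArg (· ≫ prod.fst) hl'
      simpa [prod.lift_fst] using this
    have e2 : l = h := by
      have := congrArg (· ≫ prod.snd) hl'
      simpa [prod.lift_snd] using this
    apply (adj.homEquiv Y C).injective
    rw [← hg, ← hh, ← e1, ← e2]
  obtain ⟨g, hg⟩ := surj (τ.obj X) (𝟙 _)
  have hg' : g ≫ τ.map f = 𝟙 _ := by
    apply inj (τ.obj Y)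
    rw [← Category.assoc, hg, Category.id_comp, Category.comp_id]
  exact ⟨g, hg, hg'⟩
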